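/- Let X be a Hausdorff locally solid vector lattice and (T_α) a net of band preserving linear operators on X converging pointwise to a linear operator T. Then T is band preserving. -/

import Mathlib

open Filter Topology Bornology Function Pointwise

/-- A set in a lattice-ordered group is solid if it contains every element
dominated in absolute value by one of its members. -/
def Solid {X : Type*} [Lattice X] [AddCommGroup X] (S : Set X) : Prop :=
  ∀ x y : X, |x| ≤ |y| → y ∈ S → x ∈ S

/-- The linear topology is locally solid: it admits a base at zero of solid sets. -/
def LocallySolid (X : Type*) [Lattice X] [AddCommGroup X] [TopologicalSpace X] : Prop :=
  ∀ V ∈ 𝓝 (0 : X), ∃ U ∈ 𝓝 (0 : X), Solid U ∧ U ⊆ V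

/-- Archimedean property of a vector lattice. -/
def ArchimedeanVL (X : Type*) [Lattice X] [AddCommGroup X] : Prop :=
  ∀ x y : X, (∀ n : ℕ, n • x ≤ y) → x ≤ 0

/-- A band preserving operator. -/
def BandPreserving {X : Type*} [Lattice X] [AddCommGroup X] [Module ℝ X]
    (T : X →ₗ[ℝ] X) : Prop :=
  ∀ x y : X, |x| ⊓ |y| = 0 → |T x| ⊓ |y| = 0

/-- An order bounded operator: it maps order intervals into order intervals. -/
def OrderBounded {X : Type*} [Lattice X] [AddCommGroup X] [Module ℝ X]
    (T : X →ₗ[ℝ] X) : Prop :=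
  ∀ a b : X, ∃ c d : X, T '' Set.Icc a b ⊆ Set.Icc c d

/-- An orthomorphism: an order bounded band preserving operator. -/
def Orthomorphism {X : Type*} [Lattice X] [AddCommGroup X] [Module ℝ X]
    (T : X →ₗ[ℝ] X) : Prop :=
  OrderBounded T ∧ BandPreserving T

/-- An `nb`-bounded operator: it maps some zero neighborhood to a topologically
bounded set. -/
def NbBounded {X : Type*} [Lattice X] [AddCommGroup X] [Module ℝ X]
    [TopologicalSpace X] (T : X →ₗ[ℝ] X) : Prop :=
  ∃ U ∈ 𝓝 (0 : X), IsVonNBounded ℝ (T '' U)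

/-- A `bb`-bounded operator: it maps topologically bounded sets to bounded sets. -/
def BbBounded {X : Type*} [Lattice X] [AddCommGroup X] [Module ℝ X]
    [TopologicalSpace X] (T : X →ₗ[ℝ] X) : Prop :=
  ∀ B : Set X, IsVonNBounded ℝ B → IsVonNBounded ℝ (T '' B)

section Aux
variable {X : Type*} [Lattice X] [AddCommGroup X]
  [CovariantClass X X (· + ·) (· ≤ ·)] [CovariantClass X X (swap (· + ·)) (· ≤ ·)]

lemma my_inf_sub_le (a b c : X) : a ⊓ c - b ⊓ c ≤ |a - b| := by
  have h1 : a ⊓ c ≤ (b + |a - b|) ⊓ c := by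
    apply inf_le_inf_right
    calc a = b + (a - b) := by abel
      _ ≤ b + |a - b| := add_le_add_right (le_abs_self _) _
  have h2 : (b + |a - b|) ⊓ c ≤ b ⊓ c + |a - b| := by
    rw [← sub_le_iff_le_add, inf_sub]
    exact inf_le_inf (by simp) (sub_le_self _ (abs_nonneg _))
  have := h1.trans h2
  rwa [sub_le_iff_le_add, add_comm]

lemma my_abs_inf_sub_inf_le (a b c : X) : |a ⊓ c - b ⊓ c| ≤ |a - b| := by
  rw [abs_le']
  refine ⟨my_inf_sub_le a b c, ?_⟩
  rw [neg_sub, abs_sub_comm]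
  exact my_inf_sub_le b a c
end Aux

/-- a pointwise limit of band preserving operators on a Hausdorff
locally solid vector lattice is band preserving. -/
theorem pointwise_limit_bandPreserving {X : Type*}
    [Lattice X] [AddCommGroup X] [Module ℝ X] [TopologicalSpace X]
    [IsTopologicalAddGroup X] [ContinuousSMul ℝ X]
    [CovariantClass X X (· + ·) (· ≤ ·)] [T2Space X]
    (hls : LocallySolid X)
    {ι : Type*} (l : Filter ι) [l.NeBot]
    (Tnet : ι → (X →ₗ[ℝ] X))
    (hbp : ∀ a : ι, BandPreserving (Tnet a))
    (T : X →ₗ[ℝ] X)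
    (hconv : ∀ x : X, Tendsto (fun a => Tnet a x) l (𝓝 (T x))) :
    BandPreserving T := by
  haveI : CovariantClass X X (swap (· + ·)) (· ≤ ·) :=
    ⟨fun a b c h => by simpa [add_comm] using add_le_add_left h a⟩
  intro x y hxy
  have hzero : ∀ a, |Tnet a x| ⊓ |y| = 0 := fun a => hbp a x y hxy
  have key : Tendsto (fun a => |Tnet a x| ⊓ |y|) l (𝓝 (|T x| ⊓ |y|)) := by
    rw [← tendsto_sub_nhds_zero_iff]
    intro V hV
    obtain ⟨U, hU, hUs, hUV⟩ := hls V hV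
    have h1 : Tendsto (fun a => Tnet a x - T x) l (𝓝 0) := by
      simpa using (hconv x).sub (tendsto_const_nhds (x := T x))
    rw [Filter.mem_map]
    filter_upwards [h1.eventually_mem hU] with a ha
    apply hUV
    refine hUs _ (Tnet a x - T x) ?_ ha
    calc |(|Tnet a x| ⊓ |y|) - (|T x| ⊓ |y|)|
        ≤ |(|Tnet a x|) - (|T x|)| := my_abs_inf_sub_inf_le _ _ _
      _ ≤ |Tnet a x - T x| := abs_abs_sub_abs_le _ _
  have h0 : Tendsto (fun a => |Tnet a x| ⊓ |y|) l (𝓝 0) := by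
    simp only [hzero]
    exact (tendsto_const_nhds : Tendsto (fun _ : ι => (0 : X)) l (𝓝 0))
  exact tendsto_nhds_unique key h0
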